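/- Let T > 0 and let ψ : [0,T] → ℝ be continuously differentiable with ψ(0) = 0. Then for all t ∈ (0,T) and x > 0, the boundary-driven heat solution u(t,x) = −2∫₀ᵗ ∂ₓG(t−τ, x) ψ(τ) dτ satisfies ∂ₓu(t,x) = −2∫₀ᵗ G(τ, x) ψ'(t−τ) dτ and ∂ₓ²u(t,x) = −2∫₀ᵗ ∂ₓG(τ, x) ψ'(t−τ) dτ; in particular ∂ₓ²u is itself the boundary-driven heat solution associated with the boundary datum ψ'. -/

import Mathlib

open Real MeasureTheory Set Filter

/-- The one-dimensional heat kernel `G(t,x) = (4πt)^{−1/2} exp(−x²/(4t))`. -/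
noncomputable def heatG (t x : ℝ) : ℝ :=
  (Real.sqrt (4 * Real.pi * t))⁻¹ * Real.exp (-(x ^ 2) / (4 * t))

/-- The spatial derivative of the heat kernel,
`∂ₓG(t,x) = −(1/(4√π)) t^{−3/2} x exp(−x²/(4t))`. -/
noncomputable def heatGx (t x : ℝ) : ℝ :=
  -(1 / (4 * Real.sqrt Real.pi)) * t ^ (-(3 : ℝ) / 2) * x * Real.exp (-(x ^ 2) / (4 * t))

/-- The boundary-driven heat solution `u(t,x) = −2∫₀ᵗ ∂ₓG(t−τ, x) ψ(τ) dτ`. -/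
noncomputable def heatU (ψ : ℝ → ℝ) (t x : ℝ) : ℝ :=
  -2 * ∫ τ in (0 : ℝ)..t, heatGx (t - τ) x * ψ τ

/-- Second spatial derivative of the heat kernel (= time derivative). -/
noncomputable def heatGxx (t x : ℝ) : ℝ :=
  -(1 / (4 * Real.sqrt Real.pi)) * t ^ (-(3 : ℝ) / 2) * (1 - x ^ 2 / (2 * t)) *
    Real.exp (-(x ^ 2) / (4 * t))

lemma sqrtpi_pos : 0 < Real.sqrt Real.pi := Real.sqrt_pos.2 Real.pi_pos

lemma exp_inv_le {c σ : ℝ} (hc : 0 < c) (hσ : 0 < σ) :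
    Real.exp (-(c / σ)) ≤ 27 * σ ^ 3 / c ^ 3 := by
  have h1 : c / (3 * σ) + 1 ≤ Real.exp (c / (3 * σ)) := Real.add_one_le_exp _
  have h0 : 0 ≤ c / (3 * σ) := by positivity
  have h2 : (c / (3 * σ)) ^ 3 ≤ Real.exp (c / σ) := by
    have hE : Real.exp (c / σ) = Real.exp (c / (3 * σ)) ^ 3 := by
      rw [← Real.exp_nat_mul]; push_cast; congr 1; field_simp
    rw [hE]
    calc (c / (3 * σ)) ^ 3 ≤ (c / (3 * σ) + 1) ^ 3 := by nlinarith
      _ ≤ _ := pow_le_pow_left₀ (by linarith) h1 3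
  rw [Real.exp_neg]
  have h3 : 0 < (c / (3 * σ)) ^ 3 := by positivity
  calc (Real.exp (c / σ))⁻¹ ≤ ((c / (3 * σ)) ^ 3)⁻¹ := by
        exact inv_anti₀ h3 h2
    _ = 27 * σ ^ 3 / c ^ 3 := by field_simp; ring

lemma rpow_exp_le (p : ℝ) {c σ : ℝ} (hc : 0 < c) (hσ : 0 < σ) :
    σ ^ p * Real.exp (-(c / σ)) ≤ 27 / c ^ 3 * σ ^ (p + 3) := by
  have h0 : (0 : ℝ) ≤ σ ^ p := Real.rpow_nonneg hσ.le p
  calc σ ^ p * Real.exp (-(c / σ)) ≤ σ ^ p * (27 * σ ^ 3 / c ^ 3) :=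
        mul_le_mul_of_nonneg_left (exp_inv_le hc hσ) h0
    _ = 27 / c ^ 3 * σ ^ (p + 3) := by
        rw [Real.rpow_add hσ, show ((3:ℝ)) = ((3:ℕ):ℝ) by norm_num, Real.rpow_natCast]
        ring

lemma hasDerivAt_heatGx_x {σ : ℝ} (hσ : 0 < σ) (y : ℝ) :
    HasDerivAt (fun y => heatGx σ y) (heatGxx σ y) y := by
  have hg : HasDerivAt (fun y : ℝ => -(y ^ 2) / (4 * σ)) (-(2 * y ^ 1) / (4 * σ)) y :=
    ((hasDerivAt_pow 2 y).neg).div_const (4 * σ)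
  have hE := hg.exp
  have h1 : HasDerivAt (fun y : ℝ => -(1 / (4 * Real.sqrt Real.pi)) * σ ^ (-(3:ℝ)/2) * y)
      (-(1 / (4 * Real.sqrt Real.pi)) * σ ^ (-(3:ℝ)/2) * 1) y :=
    (hasDerivAt_id y).const_mul _
  have h := h1.mul hE
  refine h.congr_deriv ?_
  symm
  unfold heatGxx
  have hπ := sqrtpi_pos
  field_simp
  ring

lemma sqrt4pi {σ : ℝ} (hσ : 0 ≤ σ) :
    Real.sqrt (4 * Real.pi * σ) = 2 * Real.sqrt Real.pi * Real.sqrt σ := by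
  rw [show (4:ℝ) * Real.pi * σ = (2 * Real.sqrt Real.pi) ^ 2 * σ by
        rw [mul_pow, Real.sq_sqrt Real.pi_pos.le]; norm_num,
      Real.sqrt_mul (by positivity), Real.sqrt_sq (by positivity)]

lemma rpow_neg_half {σ : ℝ} (hσ : 0 < σ) : σ ^ (-(1:ℝ)/2) = (Real.sqrt σ)⁻¹ := by
  rw [show -(1:ℝ)/2 = -(1/2) by norm_num, Real.rpow_neg hσ.le, ← Real.sqrt_eq_rpow]

lemma rpow_neg_3half {σ : ℝ} (hσ : 0 < σ) : σ ^ (-(3:ℝ)/2) = (σ * Real.sqrt σ)⁻¹ := by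
  rw [show -(3:ℝ)/2 = -(3/2) by norm_num, Real.rpow_neg hσ.le]
  congr 1
  rw [show (3:ℝ)/2 = 1 + 1/2 by norm_num, Real.rpow_add hσ, Real.rpow_one, ← Real.sqrt_eq_rpow]

lemma heatG_eq {σ : ℝ} (hσ : 0 < σ) (x : ℝ) :
    heatG σ x = (2 * Real.sqrt Real.pi)⁻¹ * σ ^ (-(1:ℝ)/2) * Real.exp (-(x^2) * (4*σ)⁻¹) := by
  unfold heatG
  rw [sqrt4pi hσ.le, rpow_neg_half hσ, div_eq_mul_inv, mul_inv]

lemma hasDerivAt_heatG_x {σ : ℝ} (hσ : 0 < σ) (y : ℝ) :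
    HasDerivAt (fun y => heatG σ y) (heatGx σ y) y := by
  have hg : HasDerivAt (fun y : ℝ => -(y ^ 2) / (4 * σ)) (-(2 * y ^ 1) / (4 * σ)) y :=
    ((hasDerivAt_pow 2 y).neg).div_const (4 * σ)
  have h := hg.exp.const_mul (Real.sqrt (4 * Real.pi * σ))⁻¹
  refine h.congr_deriv ?_
  symm
  unfold heatGx
  rw [sqrt4pi hσ.le, rpow_neg_3half hσ]
  have hπ := sqrtpi_pos
  have hs : 0 < Real.sqrt σ := Real.sqrt_pos.2 hσ
  have hss : Real.sqrt σ * Real.sqrt σ = σ := Real.mul_self_sqrt hσ.le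
  field_simp

lemma hasDerivAt_heatG_t {σ : ℝ} (hσ : 0 < σ) (x : ℝ) :
    HasDerivAt (fun s => heatG s x) (heatGxx σ x) σ := by
  have h1 : HasDerivAt (fun s : ℝ => s ^ (-(1:ℝ)/2)) ((-(1:ℝ)/2) * σ ^ (-(1:ℝ)/2 - 1)) σ :=
    Real.hasDerivAt_rpow_const (Or.inl hσ.ne')
  have h2 : HasDerivAt (fun s : ℝ => (4 * s)⁻¹) (-(4 * 1) / (4 * σ) ^ 2) σ :=
    ((hasDerivAt_id σ).const_mul 4).inv (by positivity)
  have h3 := (h2.const_mul (-(x^2))).exp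
  have hg := (h1.const_mul (2 * Real.sqrt Real.pi)⁻¹).mul h3
  have heq : (fun s => heatG s x) =ᶠ[nhds σ]
      (fun s => (2 * Real.sqrt Real.pi)⁻¹ * s ^ (-(1:ℝ)/2) * Real.exp (-(x^2) * (4*s)⁻¹)) := by
    filter_upwards [isOpen_Ioi.mem_nhds (show σ ∈ Ioi 0 from hσ)] with s hs
    exact heatG_eq hs x
  refine HasDerivAt.congr_of_eventuallyEq ?_ heq
  refine hg.congr_deriv ?_
  symm
  unfold heatGxx
  rw [show (-(1:ℝ)/2 - 1) = -(3:ℝ)/2 by norm_num,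
      show σ ^ (-(1:ℝ)/2) = σ ^ (-(3:ℝ)/2) * σ by
        rw [show (-(1:ℝ)/2) = (-(3:ℝ)/2) + 1 by norm_num, Real.rpow_add hσ, Real.rpow_one]]
  have hπ := sqrtpi_pos
  rw [show -(x^2) * (4*σ)⁻¹ = -(x^2)/(4*σ) by ring]
  field_simp
  ring

lemma exp_arg_le {x y σ : ℝ} (hx : 0 < x) (hσ : 0 < σ) (hy : x/2 ≤ y) :
    Real.exp (-(y^2) / (4*σ)) ≤ Real.exp (-((x^2/16) / σ)) := by
  apply Real.exp_le_exp.2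
  rw [neg_div, neg_le_neg_iff, div_le_div_iff₀ hσ (by positivity)]
  nlinarith [mul_nonneg (mul_nonneg (by linarith : (0:ℝ) ≤ y - x/2)
    (by linarith : (0:ℝ) ≤ y + x/2)) hσ.le]

lemma heatGx_abs_le {t x σ y : ℝ} (hx : 0 < x) (hσ : σ ∈ Set.Ioc (0:ℝ) t)
    (hy1 : x/2 ≤ y) (hy2 : y ≤ 3*x/2) :
    |heatGx σ y| ≤ (4 * Real.sqrt Real.pi)⁻¹ * (3*x/2) * (27 / (x^2/16)^3 * t^((3:ℝ)/2)) := by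
  have hσ0 := hσ.1
  have hc : (0:ℝ) < x^2/16 := by positivity
  have hr : (0:ℝ) ≤ σ ^ (-(3:ℝ)/2) := Real.rpow_nonneg hσ0.le _
  have hπ := sqrtpi_pos
  have key : σ ^ (-(3:ℝ)/2) * Real.exp (-(y^2)/(4*σ)) ≤ 27 / (x^2/16)^3 * t^((3:ℝ)/2) := by
    calc σ ^ (-(3:ℝ)/2) * Real.exp (-(y^2)/(4*σ))
        ≤ σ ^ (-(3:ℝ)/2) * Real.exp (-((x^2/16)/σ)) :=
          mul_le_mul_of_nonneg_left (exp_arg_le hx hσ0 hy1) hr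
      _ ≤ 27 / (x^2/16)^3 * σ ^ (-(3:ℝ)/2 + 3) := rpow_exp_le _ hc hσ0
      _ ≤ 27 / (x^2/16)^3 * t^((3:ℝ)/2) := by
          rw [show (-(3:ℝ)/2 + 3) = (3:ℝ)/2 by norm_num]
          exact mul_le_mul_of_nonneg_left
            (Real.rpow_le_rpow hσ0.le hσ.2 (by norm_num)) (by positivity)
  unfold heatGx
  rw [abs_mul, abs_mul, abs_mul, abs_neg, abs_div, abs_one,
      abs_of_nonneg hr, Real.abs_exp, abs_of_pos (by positivity : (0:ℝ) < 4 * Real.sqrt Real.pi)]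
  have hyabs : |y| ≤ 3*x/2 := by
    rw [abs_of_nonneg (by linarith)]; exact hy2
  calc 1/(4*Real.sqrt Real.pi) * σ ^ (-(3:ℝ)/2) * |y| * Real.exp (-(y^2)/(4*σ))
      ≤ 1/(4*Real.sqrt Real.pi) * σ ^ (-(3:ℝ)/2) * (3*x/2) * Real.exp (-(y^2)/(4*σ)) := by
        have hE : (0:ℝ) ≤ Real.exp (-(y^2)/(4*σ)) := (Real.exp_pos _).le
        apply mul_le_mul_of_nonneg_right _ hE
        apply mul_le_mul_of_nonneg_left hyabs (by positivity)
    _ = 1/(4*Real.sqrt Real.pi) * (3*x/2) * (σ ^ (-(3:ℝ)/2) * Real.exp (-(y^2)/(4*σ))) := by ring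
    _ ≤ 1/(4*Real.sqrt Real.pi) * (3*x/2) * (27 / (x^2/16)^3 * t^((3:ℝ)/2)) := by
        apply mul_le_mul_of_nonneg_left key (by positivity)
    _ = (4 * Real.sqrt Real.pi)⁻¹ * (3*x/2) * (27 / (x^2/16)^3 * t^((3:ℝ)/2)) := by
        rw [one_div]

lemma heatGxx_abs_le {t x σ y : ℝ} (hx : 0 < x) (hσ : σ ∈ Set.Ioc (0:ℝ) t)
    (hy1 : x/2 ≤ y) (hy2 : y ≤ 3*x/2) :
    |heatGxx σ y| ≤ (4 * Real.sqrt Real.pi)⁻¹ *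
      (27 / (x^2/16)^3 * t^((3:ℝ)/2) + 9*x^2/8 * (27 / (x^2/16)^3 * t^((1:ℝ)/2))) := by
  have hσ0 := hσ.1
  have hc : (0:ℝ) < x^2/16 := by positivity
  have hr : (0:ℝ) ≤ σ ^ (-(3:ℝ)/2) := Real.rpow_nonneg hσ0.le _
  have hπ := sqrtpi_pos
  have hE : (0:ℝ) ≤ Real.exp (-(y^2)/(4*σ)) := (Real.exp_pos _).le
  have h52 : σ ^ (-(3:ℝ)/2) * σ⁻¹ = σ ^ (-(5:ℝ)/2) := by
    rw [show σ⁻¹ = σ ^ (-1:ℝ) by rw [Real.rpow_neg_one], ← Real.rpow_add hσ0]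
    norm_num
  have key32 : σ ^ (-(3:ℝ)/2) * Real.exp (-(y^2)/(4*σ)) ≤ 27 / (x^2/16)^3 * t^((3:ℝ)/2) := by
    calc σ ^ (-(3:ℝ)/2) * Real.exp (-(y^2)/(4*σ))
        ≤ σ ^ (-(3:ℝ)/2) * Real.exp (-((x^2/16)/σ)) :=
          mul_le_mul_of_nonneg_left (exp_arg_le hx hσ0 hy1) hr
      _ ≤ 27 / (x^2/16)^3 * σ ^ (-(3:ℝ)/2 + 3) := rpow_exp_le _ hc hσ0
      _ ≤ _ := by
          rw [show (-(3:ℝ)/2 + 3) = (3:ℝ)/2 by norm_num]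
          exact mul_le_mul_of_nonneg_left
            (Real.rpow_le_rpow hσ0.le hσ.2 (by norm_num)) (by positivity)
  have key52 : σ ^ (-(5:ℝ)/2) * Real.exp (-(y^2)/(4*σ)) ≤ 27 / (x^2/16)^3 * t^((1:ℝ)/2) := by
    have hr5 : (0:ℝ) ≤ σ ^ (-(5:ℝ)/2) := Real.rpow_nonneg hσ0.le _
    calc σ ^ (-(5:ℝ)/2) * Real.exp (-(y^2)/(4*σ))
        ≤ σ ^ (-(5:ℝ)/2) * Real.exp (-((x^2/16)/σ)) :=
          mul_le_mul_of_nonneg_left (exp_arg_le hx hσ0 hy1) hr5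
      _ ≤ 27 / (x^2/16)^3 * σ ^ (-(5:ℝ)/2 + 3) := rpow_exp_le _ hc hσ0
      _ ≤ _ := by
          rw [show (-(5:ℝ)/2 + 3) = (1:ℝ)/2 by norm_num]
          exact mul_le_mul_of_nonneg_left
            (Real.rpow_le_rpow hσ0.le hσ.2 (by norm_num)) (by positivity)
  unfold heatGxx
  rw [abs_mul, abs_mul, abs_mul, abs_neg, abs_div, abs_one,
      abs_of_nonneg hr, Real.abs_exp, abs_of_pos (by positivity : (0:ℝ) < 4 * Real.sqrt Real.pi)]
  have habs : |1 - y^2/(2*σ)| ≤ 1 + y^2/(2*σ) := by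
    have := abs_sub (1:ℝ) (y^2/(2*σ))
    calc |1 - y^2/(2*σ)| ≤ |1| + |y^2/(2*σ)| := abs_sub _ _
      _ = 1 + y^2/(2*σ) := by
          rw [abs_one, abs_of_nonneg (by positivity)]
  calc 1/(4*Real.sqrt Real.pi) * σ ^ (-(3:ℝ)/2) * |1 - y^2/(2*σ)| * Real.exp (-(y^2)/(4*σ))
      ≤ 1/(4*Real.sqrt Real.pi) * σ ^ (-(3:ℝ)/2) * (1 + y^2/(2*σ)) * Real.exp (-(y^2)/(4*σ)) := by
        apply mul_le_mul_of_nonneg_right _ hE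
        exact mul_le_mul_of_nonneg_left habs (by positivity)
    _ = 1/(4*Real.sqrt Real.pi) * (σ ^ (-(3:ℝ)/2) * Real.exp (-(y^2)/(4*σ))
          + y^2/2 * ((σ ^ (-(3:ℝ)/2) * σ⁻¹) * Real.exp (-(y^2)/(4*σ)))) := by
        field_simp
    _ ≤ 1/(4*Real.sqrt Real.pi) * (27 / (x^2/16)^3 * t^((3:ℝ)/2)
          + 9*x^2/8 * (27 / (x^2/16)^3 * t^((1:ℝ)/2))) := by
        apply mul_le_mul_of_nonneg_left _ (by positivity)
        apply add_le_add key32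
        rw [h52]
        have hy2' : y^2/2 ≤ 9*x^2/8 := by nlinarith
        have h5E : (0:ℝ) ≤ σ ^ (-(5:ℝ)/2) * Real.exp (-(y^2)/(4*σ)) := by positivity
        calc y^2/2 * (σ ^ (-(5:ℝ)/2) * Real.exp (-(y^2)/(4*σ)))
            ≤ 9*x^2/8 * (σ ^ (-(5:ℝ)/2) * Real.exp (-(y^2)/(4*σ))) :=
              mul_le_mul_of_nonneg_right hy2' h5E
          _ ≤ 9*x^2/8 * (27 / (x^2/16)^3 * t^((1:ℝ)/2)) :=
              mul_le_mul_of_nonneg_left key52 (by positivity)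
    _ = _ := by rw [one_div]

lemma heatG_abs_le {x σ : ℝ} (hx : 0 < x) (hσ : 0 < σ) :
    |heatG σ x| ≤ (2 * Real.sqrt Real.pi)⁻¹ * (27 / (x^2/4)^3) * σ ^ ((5:ℝ)/2) := by
  have hπ := sqrtpi_pos
  have hc : (0:ℝ) < x^2/4 := by positivity
  rw [heatG_eq hσ x, show -(x^2) * (4*σ)⁻¹ = -((x^2/4)/σ) by field_simp]
  have hr : (0:ℝ) ≤ σ ^ (-(1:ℝ)/2) := Real.rpow_nonneg hσ.le _
  rw [abs_mul, abs_mul, abs_of_pos (by positivity : (0:ℝ) < (2 * Real.sqrt Real.pi)⁻¹),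
      abs_of_nonneg hr, Real.abs_exp]
  have key : σ ^ (-(1:ℝ)/2) * Real.exp (-((x^2/4)/σ)) ≤ 27 / (x^2/4)^3 * σ ^ ((5:ℝ)/2) := by
    calc σ ^ (-(1:ℝ)/2) * Real.exp (-((x^2/4)/σ))
        ≤ 27 / (x^2/4)^3 * σ ^ (-(1:ℝ)/2 + 3) := rpow_exp_le _ hc hσ
      _ = 27 / (x^2/4)^3 * σ ^ ((5:ℝ)/2) := by
          rw [show (-(1:ℝ)/2 + 3) = (5:ℝ)/2 by norm_num]
  calc (2 * Real.sqrt Real.pi)⁻¹ * σ ^ (-(1:ℝ)/2) * Real.exp (-((x^2/4)/σ))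
      = (2 * Real.sqrt Real.pi)⁻¹ * (σ ^ (-(1:ℝ)/2) * Real.exp (-((x^2/4)/σ))) := by ring
    _ ≤ (2 * Real.sqrt Real.pi)⁻¹ * (27 / (x^2/4)^3 * σ ^ ((5:ℝ)/2)) :=
        mul_le_mul_of_nonneg_left key (by positivity)
    _ = _ := by ring

lemma continuousAt_exp_kernel (y : ℝ) {σ : ℝ} (hσ : 0 < σ) :
    ContinuousAt (fun s : ℝ => Real.exp (-(y^2) / (4*s))) σ := by
  apply Real.continuous_exp.continuousAt.comp
  exact ContinuousAt.div continuousAt_const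
    ((continuous_const.mul continuous_id).continuousAt) (by positivity)

lemma continuousAt_heatGx_t (y : ℝ) {σ : ℝ} (hσ : 0 < σ) :
    ContinuousAt (fun s => heatGx s y) σ := by
  unfold heatGx
  exact (((Real.continuousAt_rpow_const σ _ (Or.inl hσ.ne')).const_mul _).mul
    continuousAt_const).mul (continuousAt_exp_kernel y hσ)

lemma continuousAt_heatGxx_t (y : ℝ) {σ : ℝ} (hσ : 0 < σ) :
    ContinuousAt (fun s => heatGxx s y) σ := by
  unfold heatGxx
  refine ContinuousAt.mul (ContinuousAt.mul
    ((Real.continuousAt_rpow_const σ _ (Or.inl hσ.ne')).const_mul _) ?_)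
    (continuousAt_exp_kernel y hσ)
  exact continuousAt_const.sub (ContinuousAt.div continuousAt_const
    ((continuous_const.mul continuous_id).continuousAt) (by positivity))

lemma continuousAt_heatG_t (y : ℝ) {σ : ℝ} (hσ : 0 < σ) :
    ContinuousAt (fun s => heatG s y) σ := by
  unfold heatG
  refine ContinuousAt.mul (ContinuousAt.inv₀ ?_ (by positivity)) (continuousAt_exp_kernel y hσ)
  exact Real.continuous_sqrt.continuousAt.comp
    ((continuous_const.mul continuous_id).continuousAt)

lemma integrable_of_bdd {f : ℝ → ℝ} {t C : ℝ} (ht : 0 < t)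
    (hc : ContinuousOn f (Set.Ioc 0 t)) (hb : ∀ σ ∈ Set.Ioc (0:ℝ) t, |f σ| ≤ C) :
    IntervalIntegrable f MeasureTheory.volume 0 t := by
  rw [intervalIntegrable_iff, Set.uIoc_of_le ht.le]
  exact ⟨hc.aestronglyMeasurable measurableSet_Ioc,
    MeasureTheory.HasFiniteIntegral.restrict_of_bounded (C := C) measure_Ioc_lt_top
      ((MeasureTheory.ae_restrict_iff' measurableSet_Ioc).2
        (MeasureTheory.ae_of_all _ fun σ hσ => by simpa [Real.norm_eq_abs] using hb σ hσ))⟩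

lemma stepA {t x : ℝ} (ht : 0 < t) (hx : 0 < x) {φ : ℝ → ℝ} (hφ : Continuous φ) :
    HasDerivAt (fun y => ∫ σ in (0:ℝ)..t, heatGx σ y * φ σ)
      (∫ σ in (0:ℝ)..t, heatGxx σ x * φ σ) x := by
  obtain ⟨M, hM⟩ := (isCompact_Icc (a := (0:ℝ)) (b := t)).exists_bound_of_continuousOn
    hφ.continuousOn
  have hM0 : 0 ≤ M := le_trans (norm_nonneg _) (hM 0 (by constructor <;> linarith))
  have hball : ∀ y ∈ Metric.ball x (x/2), x/2 ≤ y ∧ y ≤ 3*x/2 := by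
    intro y hy
    rw [Metric.mem_ball, Real.dist_eq, abs_sub_lt_iff] at hy
    constructor <;> linarith [hy.1, hy.2]
  have hmem : x ∈ Metric.ball x (x/2) := Metric.mem_ball_self (by positivity)
  have haesm : ∀ y : ℝ, MeasureTheory.AEStronglyMeasurable (fun σ => heatGx σ y * φ σ)
      (MeasureTheory.volume.restrict (Set.uIoc 0 t)) := by
    intro y
    rw [Set.uIoc_of_le ht.le]
    refine ContinuousOn.aestronglyMeasurable ?_ measurableSet_Ioc
    exact (fun σ hσ => ((continuousAt_heatGx_t y hσ.1).mul hφ.continuousAt).continuousWithinAt)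
  have haesm' : MeasureTheory.AEStronglyMeasurable (fun σ => heatGxx σ x * φ σ)
      (MeasureTheory.volume.restrict (Set.uIoc 0 t)) := by
    rw [Set.uIoc_of_le ht.le]
    refine ContinuousOn.aestronglyMeasurable ?_ measurableSet_Ioc
    exact (fun σ hσ => ((continuousAt_heatGxx_t x hσ.1).mul hφ.continuousAt).continuousWithinAt)
  refine (intervalIntegral.hasDerivAt_integral_of_dominated_loc_of_deriv_le
    (F := fun y σ => heatGx σ y * φ σ) (F' := fun y σ => heatGxx σ y * φ σ)
    (bound := fun _ => (4 * Real.sqrt Real.pi)⁻¹ *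
      (27 / (x^2/16)^3 * t^((3:ℝ)/2) + 9*x^2/8 * (27 / (x^2/16)^3 * t^((1:ℝ)/2))) * M)
    (Metric.ball_mem_nhds x (show (0:ℝ) < x/2 by positivity)) (Filter.Eventually.of_forall haesm) ?_ haesm' ?_ ?_ ?_).2
  · -- integrability of F x
    apply integrable_of_bdd (C := (4 * Real.sqrt Real.pi)⁻¹ * (3*x/2) *
      (27 / (x^2/16)^3 * t^((3:ℝ)/2)) * M) ht
    · exact fun σ hσ => ((continuousAt_heatGx_t x hσ.1).mul hφ.continuousAt).continuousWithinAt
    · intro σ hσ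
      rw [abs_mul]
      exact mul_le_mul (heatGx_abs_le hx hσ (by linarith) (by linarith))
        (by simpa [Real.norm_eq_abs] using hM σ ⟨hσ.1.le, hσ.2⟩) (abs_nonneg _)
        (by positivity)
  · -- bound on F'
    refine MeasureTheory.ae_of_all _ fun σ hσ y hy => ?_
    rw [Set.uIoc_of_le ht.le] at hσ
    obtain ⟨hy1, hy2⟩ := hball y hy
    rw [Real.norm_eq_abs, abs_mul]
    exact mul_le_mul (heatGxx_abs_le hx hσ hy1 hy2)
      (by simpa [Real.norm_eq_abs] using hM σ ⟨hσ.1.le, hσ.2⟩) (abs_nonneg _) (by positivity)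
  · exact intervalIntegrable_const
  · refine MeasureTheory.ae_of_all _ fun σ hσ y hy => ?_
    rw [Set.uIoc_of_le ht.le] at hσ
    exact (hasDerivAt_heatGx_x hσ.1 y).mul_const (φ σ)

lemma stepB {t x : ℝ} (ht : 0 < t) (hx : 0 < x) {φ : ℝ → ℝ} (hφ : Continuous φ) :
    HasDerivAt (fun y => ∫ σ in (0:ℝ)..t, heatG σ y * φ σ)
      (∫ σ in (0:ℝ)..t, heatGx σ x * φ σ) x := by
  obtain ⟨M, hM⟩ := (isCompact_Icc (a := (0:ℝ)) (b := t)).exists_bound_of_continuousOn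
    hφ.continuousOn
  have hM0 : 0 ≤ M := le_trans (norm_nonneg _) (hM 0 (by constructor <;> linarith))
  have hball : ∀ y ∈ Metric.ball x (x/2), x/2 ≤ y ∧ y ≤ 3*x/2 := by
    intro y hy
    rw [Metric.mem_ball, Real.dist_eq, abs_sub_lt_iff] at hy
    constructor <;> linarith [hy.1, hy.2]
  have haesm : ∀ y : ℝ, MeasureTheory.AEStronglyMeasurable (fun σ => heatG σ y * φ σ)
      (MeasureTheory.volume.restrict (Set.uIoc 0 t)) := by
    intro y
    rw [Set.uIoc_of_le ht.le]
    refine ContinuousOn.aestronglyMeasurable ?_ measurableSet_Ioc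
    exact (fun σ hσ => ((continuousAt_heatG_t y hσ.1).mul hφ.continuousAt).continuousWithinAt)
  have haesm' : MeasureTheory.AEStronglyMeasurable (fun σ => heatGx σ x * φ σ)
      (MeasureTheory.volume.restrict (Set.uIoc 0 t)) := by
    rw [Set.uIoc_of_le ht.le]
    refine ContinuousOn.aestronglyMeasurable ?_ measurableSet_Ioc
    exact (fun σ hσ => ((continuousAt_heatGx_t x hσ.1).mul hφ.continuousAt).continuousWithinAt)
  refine (intervalIntegral.hasDerivAt_integral_of_dominated_loc_of_deriv_le
    (F := fun y σ => heatG σ y * φ σ) (F' := fun y σ => heatGx σ y * φ σ)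
    (bound := fun _ => (4 * Real.sqrt Real.pi)⁻¹ * (3*x/2) *
      (27 / (x^2/16)^3 * t^((3:ℝ)/2)) * M)
    (Metric.ball_mem_nhds x (show (0:ℝ) < x/2 by positivity)) (Filter.Eventually.of_forall haesm) ?_ haesm' ?_ ?_ ?_).2
  · apply integrable_of_bdd (C := (2 * Real.sqrt Real.pi)⁻¹ * (27 / (x^2/4)^3) *
      t^((5:ℝ)/2) * M) ht
    · exact fun σ hσ => ((continuousAt_heatG_t x hσ.1).mul hφ.continuousAt).continuousWithinAt
    · intro σ hσ
      rw [abs_mul]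
      refine mul_le_mul ?_ (by simpa [Real.norm_eq_abs] using hM σ ⟨hσ.1.le, hσ.2⟩)
        (abs_nonneg _) (by positivity)
      calc |heatG σ x| ≤ (2 * Real.sqrt Real.pi)⁻¹ * (27 / (x^2/4)^3) * σ ^ ((5:ℝ)/2) :=
            heatG_abs_le hx hσ.1
        _ ≤ (2 * Real.sqrt Real.pi)⁻¹ * (27 / (x^2/4)^3) * t ^ ((5:ℝ)/2) := by
            have hπ := sqrtpi_pos
            exact mul_le_mul_of_nonneg_left
              (Real.rpow_le_rpow hσ.1.le hσ.2 (by norm_num)) (by positivity)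
  · refine MeasureTheory.ae_of_all _ fun σ hσ y hy => ?_
    rw [Set.uIoc_of_le ht.le] at hσ
    obtain ⟨hy1, hy2⟩ := hball y hy
    rw [Real.norm_eq_abs, abs_mul]
    exact mul_le_mul (heatGx_abs_le hx hσ hy1 hy2)
      (by simpa [Real.norm_eq_abs] using hM σ ⟨hσ.1.le, hσ.2⟩) (abs_nonneg _) (by positivity)
  · exact intervalIntegrable_const
  · refine MeasureTheory.ae_of_all _ fun σ hσ y hy => ?_
    rw [Set.uIoc_of_le ht.le] at hσ
    exact (hasDerivAt_heatG_x hσ.1 y).mul_const (φ σ)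

lemma heatG_zero (x : ℝ) : heatG 0 x = 0 := by
  unfold heatG
  simp

lemma ibp {t x : ℝ} (ht : 0 < t) (hx : 0 < x) {ψ : ℝ → ℝ}
    (hψ : ContDiff ℝ 1 ψ) (hψ0 : ψ 0 = 0) :
    (∫ σ in (0:ℝ)..t, heatGxx σ x * ψ (t - σ)) =
      ∫ σ in (0:ℝ)..t, heatG σ x * deriv ψ (t - σ) := by
  have hψd : ∀ s, HasDerivAt ψ (deriv ψ s) s := fun s => (hψ.differentiable one_ne_zero s).hasDerivAt
  have hψc : Continuous ψ := hψ.continuous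
  have hψ'c : Continuous (deriv ψ) := hψ.continuous_deriv le_rfl
  obtain ⟨M, hM⟩ := (isCompact_Icc (a := (0:ℝ)) (b := t)).exists_bound_of_continuousOn
    (hψc.comp (continuous_const.sub continuous_id)).continuousOn
  have hM0 : 0 ≤ M := le_trans (norm_nonneg _) (hM 0 (by constructor <;> linarith))
  obtain ⟨M', hM'⟩ := (isCompact_Icc (a := (0:ℝ)) (b := t)).exists_bound_of_continuousOn
    (hψ'c.comp (continuous_const.sub continuous_id)).continuousOn
  have hM'0 : 0 ≤ M' := le_trans (norm_nonneg _) (hM' 0 (by constructor <;> linarith))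
  set f : ℝ → ℝ := fun σ => heatG σ x * ψ (t - σ) with hf
  have hπ := sqrtpi_pos
  -- integrability
  have hint1 : IntervalIntegrable (fun σ => heatGxx σ x * ψ (t - σ))
      MeasureTheory.volume 0 t := by
    apply integrable_of_bdd (C := (4 * Real.sqrt Real.pi)⁻¹ *
      (27 / (x^2/16)^3 * t^((3:ℝ)/2) + 9*x^2/8 * (27 / (x^2/16)^3 * t^((1:ℝ)/2))) * M) ht
    · exact fun σ hσ => ((continuousAt_heatGxx_t x hσ.1).mul
        ((hψc.comp (continuous_const.sub continuous_id)).continuousAt)).continuousWithinAt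
    · intro σ hσ
      rw [abs_mul]
      exact mul_le_mul (heatGxx_abs_le hx hσ (by linarith) (by linarith))
        (by simpa [Real.norm_eq_abs] using hM σ ⟨hσ.1.le, hσ.2⟩) (abs_nonneg _) (by positivity)
  have hint2 : IntervalIntegrable (fun σ => heatG σ x * deriv ψ (t - σ))
      MeasureTheory.volume 0 t := by
    apply integrable_of_bdd (C := (2 * Real.sqrt Real.pi)⁻¹ * (27 / (x^2/4)^3) *
      t^((5:ℝ)/2) * M') ht
    · exact fun σ hσ => ((continuousAt_heatG_t x hσ.1).mul
        ((hψ'c.comp (continuous_const.sub continuous_id)).continuousAt)).continuousWithinAt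
    · intro σ hσ
      rw [abs_mul]
      refine mul_le_mul ?_ (by simpa [Real.norm_eq_abs] using hM' σ ⟨hσ.1.le, hσ.2⟩)
        (abs_nonneg _) (by positivity)
      calc |heatG σ x| ≤ (2 * Real.sqrt Real.pi)⁻¹ * (27 / (x^2/4)^3) * σ ^ ((5:ℝ)/2) :=
            heatG_abs_le hx hσ.1
        _ ≤ _ := mul_le_mul_of_nonneg_left
              (Real.rpow_le_rpow hσ.1.le hσ.2 (by norm_num)) (by positivity)
  -- derivative of f on the interior
  have hderiv : ∀ σ ∈ Set.Ioo (0:ℝ) t, HasDerivWithinAt f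
      (heatGxx σ x * ψ (t - σ) - heatG σ x * deriv ψ (t - σ)) (Set.Ioi σ) σ := by
    intro σ hσ
    have hcomp : HasDerivAt (fun s => ψ (t - s)) (deriv ψ (t - σ) * (-1)) σ :=
      (hψd (t - σ)).comp σ ((hasDerivAt_id σ).const_sub t)
    have h := (hasDerivAt_heatG_t hσ.1 x).mul hcomp
    have h' : HasDerivAt f
        (heatGxx σ x * ψ (t - σ) - heatG σ x * deriv ψ (t - σ)) σ := by
      refine h.congr_deriv ?_
      ring
    exact h'.hasDerivWithinAt
  -- continuity of f on [0,t]
  have hf0 : f 0 = 0 := by simp [hf, heatG_zero]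
  have hcont : ContinuousOn f (Set.Icc 0 t) := by
    intro σ hσ
    rcases eq_or_lt_of_le hσ.1 with h0 | h0
    · -- σ = 0
      subst h0
      rw [ContinuousWithinAt, hf0]
      apply squeeze_zero_norm' (a := fun σ =>
        (2 * Real.sqrt Real.pi)⁻¹ * (27 / (x^2/4)^3) * M * σ ^ ((5:ℝ)/2))
      · filter_upwards [self_mem_nhdsWithin] with σ hσ'
        rcases eq_or_lt_of_le hσ'.1 with h0' | h0'
        · rw [← h0']
          rw [show ((0:ℝ) ^ ((5:ℝ)/2)) = 0 from Real.zero_rpow (by norm_num)]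
          simp [hf, heatG_zero]
        · rw [Real.norm_eq_abs, hf, abs_mul]
          calc |heatG σ x| * |ψ (t - σ)|
              ≤ ((2 * Real.sqrt Real.pi)⁻¹ * (27 / (x^2/4)^3) * σ ^ ((5:ℝ)/2)) * M :=
                mul_le_mul (heatG_abs_le hx h0')
                  (by simpa [Real.norm_eq_abs] using hM σ ⟨hσ'.1, hσ'.2⟩)
                  (abs_nonneg _) (by positivity)
            _ = _ := by ring
      · have : Filter.Tendsto (fun σ : ℝ => σ ^ ((5:ℝ)/2)) (nhds 0) (nhds 0) := by
          have h := (Real.continuousAt_rpow_const 0 ((5:ℝ)/2) (Or.inr (by norm_num)))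
          rw [ContinuousAt, Real.zero_rpow (by norm_num : ((5:ℝ)/2) ≠ 0)] at h
          exact h
        have := (this.const_mul ((2 * Real.sqrt Real.pi)⁻¹ * (27 / (x^2/4)^3) * M))
        rw [mul_zero] at this
        exact this.mono_left nhdsWithin_le_nhds
    · exact ((continuousAt_heatG_t x h0).mul
        ((hψc.comp (continuous_const.sub continuous_id)).continuousAt)).continuousWithinAt
  have key := intervalIntegral.integral_eq_sub_of_hasDeriv_right_of_le ht.le hcont hderiv
    (hint1.sub hint2)
  rw [hf] at key
  simp only [sub_self] at key
  rw [heatG_zero, hψ0, mul_zero, zero_mul, sub_zero] at key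
  rw [intervalIntegral.integral_sub hint1 hint2] at key
  linarith [key]

lemma heatU_eq (ψ : ℝ → ℝ) (t y : ℝ) :
    heatU ψ t y = -2 * ∫ σ in (0:ℝ)..t, heatGx σ y * ψ (t - σ) := by
  unfold heatU
  congr 1
  have h := intervalIntegral.integral_comp_sub_left
    (f := fun σ => heatGx σ y * ψ (t - σ)) (a := 0) (b := t) t
  simp only [sub_sub_cancel, sub_zero, sub_self] at h
  exact h

/-- For `ψ` continuously differentiable with `ψ(0) = 0`, the spatial derivatives of the
boundary-driven heat solution satisfy `∂ₓu(t,x) = −2∫₀ᵗ G(τ,x) ψ'(t−τ) dτ` and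
`∂ₓ²u(t,x) = −2∫₀ᵗ ∂ₓG(τ,x) ψ'(t−τ) dτ`; in particular `∂ₓ²u` is the boundary-driven
heat solution associated with the boundary datum `ψ'`. -/
theorem stmt9 (T : ℝ) (hT : 0 < T) (ψ : ℝ → ℝ) (hψ : ContDiff ℝ 1 ψ) (hψ0 : ψ 0 = 0) :
    ∀ t ∈ Set.Ioo (0 : ℝ) T, ∀ x : ℝ, 0 < x →
      (deriv (fun y => heatU ψ t y) x = -2 * ∫ τ in (0 : ℝ)..t, heatG τ x * deriv ψ (t - τ)) ∧
      (deriv (fun y => deriv (fun z => heatU ψ t z) y) x =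
        -2 * ∫ τ in (0 : ℝ)..t, heatGx τ x * deriv ψ (t - τ)) := by
  intro t ht x hx
  obtain ⟨ht0, htT⟩ := ht
  have hφ : Continuous (fun σ => ψ (t - σ)) :=
    hψ.continuous.comp (continuous_const.sub continuous_id)
  have hφ' : Continuous (fun σ => deriv ψ (t - σ)) :=
    (hψ.continuous_deriv le_rfl).comp (continuous_const.sub continuous_id)
  have part1 : ∀ y : ℝ, 0 < y → deriv (fun z => heatU ψ t z) y =
      -2 * ∫ σ in (0:ℝ)..t, heatG σ y * deriv ψ (t - σ) := by
    intro y hy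
    have hA := (stepA ht0 hy hφ).const_mul (-2 : ℝ)
    have hU : HasDerivAt (fun z => heatU ψ t z)
        (-2 * ∫ σ in (0:ℝ)..t, heatGxx σ y * ψ (t - σ)) y :=
      hA.congr_of_eventuallyEq (Filter.Eventually.of_forall fun z => heatU_eq ψ t z)
    rw [hU.deriv, ibp ht0 hy hψ hψ0]
  refine ⟨part1 x hx, ?_⟩
  have hev : (fun y => deriv (fun z => heatU ψ t z) y) =ᶠ[nhds x]
      (fun y => -2 * ∫ σ in (0:ℝ)..t, heatG σ y * deriv ψ (t - σ)) := by
    filter_upwards [isOpen_Ioi.mem_nhds (show x ∈ Set.Ioi (0:ℝ) from hx)] with y hy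
    exact part1 y hy
  rw [hev.deriv_eq]
  exact ((stepB ht0 hx hφ').const_mul (-2 : ℝ)).deriv
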